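/- (Matching lower bound underlying MatchColoring's 2-approximation guarantee.) Let H = (V, E, C, ℓ) be an unweighted edge-colored hypergraph, and call (e, f) a bad edge pair if e ∩ f ≠ ∅ and ℓ(e) ≠ ℓ(f). Suppose M is a collection of bad edge pairs that are pairwise hyperedge-disjoint (no hyperedge of E belongs to two pairs of M). Then every node coloring Y : V → C makes a mistake at (fails to satisfy) at least |M| hyperedges; i.e., the optimal unweighted MinECC objective is at least |M|. -/

import Mathlib

open scoped Classical

/-- **Matching lower bound underlying MatchColoring's 2-approximation guarantee.**
Let `H = (V, E, C, ℓ)` be an unweighted edge-colored hypergraph, and call `(e, f)` a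
bad edge pair if `e ∩ f ≠ ∅` and `ℓ(e) ≠ ℓ(f)`.  If `M` is a collection of bad edge
pairs that are pairwise hyperedge-disjoint, then every node coloring `Y : V → C`
makes a mistake at least `|M|` hyperedges. -/
theorem matching_lower_bound {V E C : Type*} [Fintype V] [Fintype E] [Fintype C]
    (edge : E → Finset V) (hne : ∀ e, (edge e).Nonempty) (ℓ : E → C)
    (M : Finset (E × E))
    (hbad : ∀ p ∈ M, (edge p.1 ∩ edge p.2).Nonempty ∧ ℓ p.1 ≠ ℓ p.2)
    (hdisj : ∀ p ∈ M, ∀ q ∈ M, p ≠ q →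
      p.1 ≠ q.1 ∧ p.1 ≠ q.2 ∧ p.2 ≠ q.1 ∧ p.2 ≠ q.2)
    (Y : V → C) :
    M.card ≤ (Finset.univ.filter (fun e : E => ∃ v ∈ edge e, Y v ≠ ℓ e)).card := by
  classical
  set f : E × E → E := fun p => if ∃ v ∈ edge p.1, Y v ≠ ℓ p.1 then p.1 else p.2 with hf
  apply Finset.card_le_card_of_injOn f
  · intro p hp
    simp only [Finset.mem_coe, Finset.mem_filter, Finset.mem_univ, true_and]
    by_cases h : ∃ v ∈ edge p.1, Y v ≠ ℓ p.1
    · simpa [hf, h] using h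
    · obtain ⟨⟨v, hv⟩, hℓ⟩ := hbad p hp
      rw [Finset.mem_inter] at hv
      simp only [hf, if_neg h]
      push_neg at h
      exact ⟨v, hv.2, by rw [h v hv.1]; exact hℓ⟩
  · intro p hp q hq hfpq
    by_contra hne'
    obtain ⟨h1, h2, h3, h4⟩ := hdisj p hp q hq hne'
    simp only [hf] at hfpq
    split_ifs at hfpq <;> simp_all
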